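/- Unbiasedness of the doubly robust estimating equation (13) in model 𝓜_a (correct extended propensity score). Under the above setup, for all bounded measurable functions ω, g and any bounded measurable function m* of (Z, C): E[ ( ω(Z,C) − E[ω(Z,C) | σ(C)] ) · ( ((1−A)/(1−π)) · g(Y₀, C) + ((A−π)/(1−π)) · m*(Z, C) ) ] = 0. -/

import Mathlib

set_option linter.unusedSectionVars false
open MeasureTheory
open scoped ENNReal NNReal

section Aux
variable {Ω : Type*} {mΩ : MeasurableSpace Ω} {P : Measure Ω} [IsFiniteMeasure P]

lemma aux_sigmaFinite_trim {m : MeasurableSpace Ω} (hm : m ≤ mΩ) :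
    SigmaFinite (P.trim hm) := by
  have : IsFiniteMeasure (P.trim hm) :=
    ⟨by rw [trim_measurableSet_eq hm MeasurableSet.univ]; exact measure_lt_top P _⟩
  infer_instance

lemma aux_integrable {f : Ω → ℝ} (hf : AEStronglyMeasurable f P) {M : ℝ}
    (h : ∀ᵐ ω ∂P, |f ω| ≤ M) : Integrable f P :=
  Integrable.mono' (integrable_const M) hf
    (by filter_upwards [h] with ω hω; rwa [Real.norm_eq_abs])

lemma aux_condexp_bdd (m : MeasurableSpace Ω) {f : Ω → ℝ} {M : ℝ} (hM : 0 ≤ M)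
    (h : ∀ᵐ ω ∂P, |f ω| ≤ M) : ∀ᵐ ω ∂P, |(P[f|m]) ω| ≤ M := by
  have := ae_bdd_condExp_of_ae_bdd (m := m) (μ := P) (f := f) (R := ⟨M, hM⟩) h
  exact this

lemma aux_pullout {m : MeasurableSpace Ω} (hm : m ≤ mΩ) {f g : Ω → ℝ}
    (hf : StronglyMeasurable[m] f) (hg : Integrable g P)
    (hfg : Integrable (fun ω => f ω * g ω) P) :
    ∫ ω, f ω * g ω ∂P = ∫ ω, f ω * (P[g|m]) ω ∂P := by
  have := aux_sigmaFinite_trim (P := P) hm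
  have h1 : ∫ ω, f ω * g ω ∂P = ∫ ω, (P[fun ω => f ω * g ω|m]) ω ∂P :=
    (integral_condExp hm).symm
  rw [h1]
  exact integral_congr_ae (condExp_mul_of_stronglyMeasurable_left hf hfg hg)

lemma aux_swap {m : MeasurableSpace Ω} (hm : m ≤ mΩ) {f g : Ω → ℝ}
    (hfm : AEStronglyMeasurable[mΩ] f P) (hgm : AEStronglyMeasurable[mΩ] g P)
    {Mf Mg : ℝ} (hMf : 0 ≤ Mf) (hMg : 0 ≤ Mg)
    (hfb : ∀ᵐ ω ∂P, |f ω| ≤ Mf) (hgb : ∀ᵐ ω ∂P, |g ω| ≤ Mg) :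
    ∫ ω, f ω * (P[g|m]) ω ∂P = ∫ ω, (P[f|m]) ω * g ω ∂P := by
  have hfi : Integrable f P := aux_integrable hfm hfb
  have hgi : Integrable g P := aux_integrable hgm hgb
  have hcg := aux_condexp_bdd (P := P) m hMg hgb
  have hcf := aux_condexp_bdd (P := P) m hMf hfb
  have hcgm : AEStronglyMeasurable[mΩ] (P[g|m]) P :=
    (stronglyMeasurable_condExp.mono hm).aestronglyMeasurable
  have hcfm : AEStronglyMeasurable[mΩ] (P[f|m]) P :=
    (stronglyMeasurable_condExp.mono hm).aestronglyMeasurable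
  have e1 : ∫ ω, (P[g|m]) ω * f ω ∂P = ∫ ω, (P[g|m]) ω * (P[f|m]) ω ∂P :=
    aux_pullout hm stronglyMeasurable_condExp hfi
      (aux_integrable (hcgm.mul hfm) (M := Mg * Mf)
        (by filter_upwards [hcg, hfb] with ω h1 h2
            rw [abs_mul]; exact mul_le_mul h1 h2 (abs_nonneg _) hMg))
  have e2 : ∫ ω, (P[f|m]) ω * g ω ∂P = ∫ ω, (P[f|m]) ω * (P[g|m]) ω ∂P :=
    aux_pullout hm stronglyMeasurable_condExp hgi
      (aux_integrable (hcfm.mul hgm) (M := Mf * Mg)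
        (by filter_upwards [hcf, hgb] with ω h1 h2
            rw [abs_mul]; exact mul_le_mul h1 h2 (abs_nonneg _) hMf))
  calc ∫ ω, f ω * (P[g|m]) ω ∂P
      = ∫ ω, (P[g|m]) ω * f ω ∂P :=
        integral_congr_ae (Filter.Eventually.of_forall fun ω => mul_comm _ _)
    _ = ∫ ω, (P[g|m]) ω * (P[f|m]) ω ∂P := e1
    _ = ∫ ω, (P[f|m]) ω * (P[g|m]) ω ∂P :=
        integral_congr_ae (Filter.Eventually.of_forall fun ω => mul_comm _ _)
    _ = ∫ ω, (P[f|m]) ω * g ω ∂P := e2.symm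

end Aux

lemma aux_C1 {Ω : Type*} {mΩ : MeasurableSpace Ω} (P : Measure Ω) [IsProbabilityMeasure P]
    {𝒵 𝒞 : Type*} [MeasurableSpace 𝒵] [MeasurableSpace 𝒞]
    (Y₀ : Ω → ℝ) (Z : Ω → 𝒵) (C : Ω → 𝒞)
    (hY₀ : Measurable Y₀) (hZ : Measurable Z) (hC : Measurable C)
    (mC : MeasurableSpace Ω) (hmC : mC = MeasurableSpace.comap C inferInstance)
    (hCI : ∀ (φ : ℝ → ℝ) (ψ : 𝒵 → ℝ), Measurable φ → Measurable ψ →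
        (∃ M, ∀ x, |φ x| ≤ M) → (∃ M, ∀ x, |ψ x| ≤ M) →
        P[fun ω => φ (Y₀ ω) * ψ (Z ω) | mC]
          =ᵐ[P] fun ω => (P[fun ω' => φ (Y₀ ω') | mC]) ω
                        * (P[fun ω' => ψ (Z ω') | mC]) ω)
    (φ : ℝ → ℝ) (u : 𝒵 × 𝒞 → ℝ) (hφ : Measurable φ) (hu : Measurable u)
    (hφB : ∃ M, ∀ x, |φ x| ≤ M) (huB : ∃ M, ∀ x, |u x| ≤ M) :
    ∫ ω, φ (Y₀ ω) * (u (Z ω, C ω) - (P[fun ω' => u (Z ω', C ω') | mC]) ω) ∂P = 0 := by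
  letI _i : MeasurableSpace Ω := mΩ
  obtain ⟨Mφ0, hφ0⟩ := hφB
  obtain ⟨Mu0, hu0⟩ := huB
  set Mφ : ℝ := max Mφ0 0 with hMφdef
  have hMφ : 0 ≤ Mφ := le_max_right _ _
  have hφb : ∀ x, |φ x| ≤ Mφ := fun x => (hφ0 x).trans (le_max_left _ _)
  set Mu : ℝ := max Mu0 0 with hMudef
  have hMu : 0 ≤ Mu := le_max_right _ _
  have hub : ∀ x, |u x| ≤ Mu := fun x => (hu0 x).trans (le_max_left _ _)
  have hmCle : mC ≤ mΩ := by rw [hmC]; exact hC.comap_le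
  have hSF : SigmaFinite (P.trim hmCle) := aux_sigmaFinite_trim hmCle
  -- notation
  have haM : Measurable[mΩ] fun ω => φ (Y₀ ω) := hφ.comp hY₀
  have hai : Integrable (fun ω => φ (Y₀ ω)) P :=
    aux_integrable haM.aestronglyMeasurable (Filter.Eventually.of_forall fun ω => hφb (Y₀ ω))
  have hUM : Measurable[mΩ] fun ω => u (Z ω, C ω) := hu.comp (hZ.prodMk hC)
  have hUi : Integrable (fun ω => u (Z ω, C ω)) P :=
    aux_integrable hUM.aestronglyMeasurable (Filter.Eventually.of_forall fun ω => hub (Z ω, C ω))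
  -- the truncated version of the conditional expectation of φ(Y₀)
  set b : Ω → ℝ := fun ω => max (-Mφ) (min ((P[fun ω' => φ (Y₀ ω')|mC]) ω) Mφ) with hbdef
  have hbmC : Measurable[mC] b :=
    Measurable.max measurable_const
      (Measurable.min stronglyMeasurable_condExp.measurable measurable_const)
  have hbM : Measurable[mΩ] b := hbmC.mono hmCle le_rfl
  have hbSM : StronglyMeasurable[mC] b := hbmC.stronglyMeasurable
  have hbb : ∀ ω, |b ω| ≤ Mφ := fun ω =>
    abs_le.mpr ⟨le_max_left _ _, max_le (by linarith) (min_le_right _ _)⟩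
  have hba : b =ᵐ[P] P[fun ω' => φ (Y₀ ω')|mC] := by
    filter_upwards [aux_condexp_bdd (P := P) mC hMφ (Filter.Eventually.of_forall fun ω => hφb (Y₀ ω))] with ω h
    obtain ⟨h1, h2⟩ := abs_le.1 h
    rw [hbdef]
    simp only
    rw [min_eq_left h2, max_eq_right h1]
  -- densities
  set d1 : Ω → ℝ≥0 := fun ω => (φ (Y₀ ω) + Mφ).toNNReal with hd1def
  set d2 : Ω → ℝ≥0 := fun ω => (b ω + Mφ).toNNReal with hd2def
  have hd1 : Measurable[mΩ] d1 := (haM.add measurable_const).real_toNNReal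
  have hd2 : Measurable[mΩ] d2 := (hbM.add measurable_const).real_toNNReal
  have hd1c : ∀ ω, ((d1 ω : ℝ)) = φ (Y₀ ω) + Mφ := fun ω =>
    Real.coe_toNNReal _ (by have := abs_le.1 (hφb (Y₀ ω)); linarith)
  have hd2c : ∀ ω, ((d2 ω : ℝ)) = b ω + Mφ := fun ω =>
    Real.coe_toNNReal _ (by have := abs_le.1 (hbb ω); linarith)
  have hρ : Measurable[mΩ] fun ω => (Z ω, C ω) := hZ.prodMk hC
  have hfin : ∀ (d : Ω → ℝ≥0), Measurable[mΩ] d → (∀ ω, (d ω : ℝ) ≤ Mφ + Mφ) →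
      IsFiniteMeasure (P.withDensity fun ω => (d ω : ℝ≥0∞)) := by
    intro d hdm hd
    refine isFiniteMeasure_withDensity (ne_top_of_le_ne_top ?_
      (lintegral_mono (g := fun _ => ENNReal.ofReal (Mφ + Mφ)) fun ω => ?_))
    · rw [lintegral_const]
      exact ENNReal.mul_ne_top ENNReal.ofReal_ne_top (measure_ne_top _ _)
    · rw [← ENNReal.ofReal_coe_nnreal]
      exact ENNReal.ofReal_le_ofReal (hd ω)
  haveI hfin1 : IsFiniteMeasure (P.withDensity fun ω => (d1 ω : ℝ≥0∞)) :=
    hfin d1 hd1 (fun ω => by rw [hd1c]; have := abs_le.1 (hφb (Y₀ ω)); linarith)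
  haveI hfin2 : IsFiniteMeasure (P.withDensity fun ω => (d2 ω : ℝ≥0∞)) :=
    hfin d2 hd2 (fun ω => by rw [hd2c]; have := abs_le.1 (hbb ω); linarith)
  set μ₁ : Measure (𝒵 × 𝒞) :=
    Measure.map (fun ω => (Z ω, C ω)) (P.withDensity fun ω => (d1 ω : ℝ≥0∞)) with hμ₁def
  set μ₂ : Measure (𝒵 × 𝒞) :=
    Measure.map (fun ω => (Z ω, C ω)) (P.withDensity fun ω => (d2 ω : ℝ≥0∞)) with hμ₂def
  have happly : ∀ (d : Ω → ℝ≥0), Measurable[mΩ] d → (∀ ω, (d ω : ℝ) ≤ Mφ + Mφ) →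
      ∀ (s : Set (𝒵 × 𝒞)), MeasurableSet s →
      (Measure.map (fun ω => (Z ω, C ω)) (P.withDensity fun ω => (d ω : ℝ≥0∞))) s
        = ENNReal.ofReal (∫ ω in (fun ω => (Z ω, C ω)) ⁻¹' s, ((d ω : ℝ)) ∂P) := by
    intro d hd hdb s hs
    rw [Measure.map_apply hρ hs, withDensity_apply _ (hρ hs)]
    exact lintegral_coe_eq_integral d
      (aux_integrable (measurable_coe_nnreal_real.comp hd).aestronglyMeasurable
        (M := Mφ + Mφ)
        (Filter.Eventually.of_forall fun ω => by
          rw [abs_of_nonneg (d ω).coe_nonneg]; exact hdb ω))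
  have hbi : Integrable b P :=
    aux_integrable hbM.aestronglyMeasurable (Filter.Eventually.of_forall hbb)
  -- rectangle computation
  have hrect : ∀ (s : Set 𝒵) (t : Set 𝒞), MeasurableSet s → MeasurableSet t →
      μ₁ (s ×ˢ t) = μ₂ (s ×ˢ t) := by
    intro s t hs ht
    rw [hμ₁def, hμ₂def,
      happly d1 hd1 (fun ω => by rw [hd1c]; have := abs_le.1 (hφb (Y₀ ω)); linarith) _ (hs.prod ht),
      happly d2 hd2 (fun ω => by rw [hd2c]; have := abs_le.1 (hbb ω); linarith) _ (hs.prod ht)]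
    congr 1
    have hpre : ((fun ω => (Z ω, C ω)) ⁻¹' (s ×ˢ t)) = Z ⁻¹' s ∩ C ⁻¹' t :=
      Set.mk_preimage_prod Z C
    rw [hpre]
    have htC : MeasurableSet[mC] (C ⁻¹' t) := by rw [hmC]; exact ⟨t, ht, rfl⟩
    set ψ : 𝒵 → ℝ := s.indicator (fun _ => (1 : ℝ)) with hψdef
    have hψ : Measurable ψ := measurable_const.indicator hs
    have hψb : ∀ x, |ψ x| ≤ 1 := fun x => by
      by_cases h : x ∈ s <;>
        simp [hψdef, Set.indicator_of_mem, Set.indicator_of_notMem, h]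
    have hind : ∀ f : Ω → ℝ, ∫ ω in Z ⁻¹' s ∩ C ⁻¹' t, f ω ∂P
        = ∫ ω in C ⁻¹' t, f ω * ψ (Z ω) ∂P := by
      intro f
      rw [Set.inter_comm, ← setIntegral_indicator (hZ hs)]
      refine integral_congr_ae (Filter.Eventually.of_forall fun ω => ?_)
      by_cases h : Z ω ∈ s <;>
        simp [Set.indicator_of_mem, Set.indicator_of_notMem, h, hψdef]
    have hq_int : Integrable (fun ω => φ (Y₀ ω) * ψ (Z ω)) P :=
      aux_integrable (haM.mul (hψ.comp hZ)).aestronglyMeasurable (M := Mφ * 1)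
        (Filter.Eventually.of_forall fun ω => by
          rw [abs_mul]; exact mul_le_mul (hφb _) (hψb _) (abs_nonneg _) hMφ)
    have hq'_int : Integrable (fun ω => b ω * ψ (Z ω)) P :=
      aux_integrable (hbM.mul (hψ.comp hZ)).aestronglyMeasurable (M := Mφ * 1)
        (Filter.Eventually.of_forall fun ω => by
          rw [abs_mul]; exact mul_le_mul (hbb _) (hψb _) (abs_nonneg _) hMφ)
    have hψZ_int : Integrable (fun ω => ψ (Z ω)) P :=
      aux_integrable (hψ.comp hZ).aestronglyMeasurable (M := 1)
        (Filter.Eventually.of_forall fun ω => hψb _)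
    have lhs_eq : ∫ ω in C ⁻¹' t, φ (Y₀ ω) * ψ (Z ω) ∂P
        = ∫ ω in C ⁻¹' t,
            (P[fun ω' => φ (Y₀ ω')|mC]) ω * (P[fun ω' => ψ (Z ω')|mC]) ω ∂P := by
      rw [← setIntegral_condExp hmCle hq_int htC]
      exact integral_congr_ae (ae_restrict_of_ae (hCI φ ψ hφ hψ ⟨Mφ0, hφ0⟩ ⟨1, hψb⟩))
    have rhs_eq : ∫ ω in C ⁻¹' t, b ω * ψ (Z ω) ∂P
        = ∫ ω in C ⁻¹' t,
            (P[fun ω' => φ (Y₀ ω')|mC]) ω * (P[fun ω' => ψ (Z ω')|mC]) ω ∂P := by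
      rw [← setIntegral_condExp hmCle hq'_int htC]
      refine integral_congr_ae (ae_restrict_of_ae ?_)
      have h1 : P[fun ω => b ω * ψ (Z ω)|mC]
          =ᵐ[P] fun ω => b ω * (P[fun ω' => ψ (Z ω')|mC]) ω :=
        condExp_mul_of_stronglyMeasurable_left hbSM hq'_int hψZ_int
      filter_upwards [h1, hba] with ω h1' h2'
      rw [h1']
      show b ω * (P[fun ω' => ψ (Z ω')|mC]) ω = _
      rw [h2']
    have hkey : ∫ ω in Z ⁻¹' s ∩ C ⁻¹' t, φ (Y₀ ω) ∂P
        = ∫ ω in Z ⁻¹' s ∩ C ⁻¹' t, b ω ∂P := by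
      rw [hind (fun ω => φ (Y₀ ω)), hind b, lhs_eq, rhs_eq]
    calc ∫ ω in Z ⁻¹' s ∩ C ⁻¹' t, ((d1 ω : ℝ)) ∂P
        = ∫ ω in Z ⁻¹' s ∩ C ⁻¹' t, (φ (Y₀ ω) + Mφ) ∂P := by simp only [hd1c]
      _ = (∫ ω in Z ⁻¹' s ∩ C ⁻¹' t, φ (Y₀ ω) ∂P)
            + ∫ ω in Z ⁻¹' s ∩ C ⁻¹' t, Mφ ∂P :=
          integral_add hai.restrict (integrable_const _)
      _ = (∫ ω in Z ⁻¹' s ∩ C ⁻¹' t, b ω ∂P)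
            + ∫ ω in Z ⁻¹' s ∩ C ⁻¹' t, Mφ ∂P := by rw [hkey]
      _ = ∫ ω in Z ⁻¹' s ∩ C ⁻¹' t, (b ω + Mφ) ∂P :=
          (integral_add hbi.restrict (integrable_const _)).symm
      _ = ∫ ω in Z ⁻¹' s ∩ C ⁻¹' t, ((d2 ω : ℝ)) ∂P := by simp only [hd2c]
  -- measure equality
  have hμeq : μ₁ = μ₂ := by
    refine ext_of_generate_finite _ generateFrom_prod.symm isPiSystem_prod
      (fun s hs => ?_) ?_
    · obtain ⟨s₁, hs₁, t₁, ht₁, rfl⟩ := hs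
      exact hrect s₁ t₁ hs₁ ht₁
    · have := hrect Set.univ Set.univ MeasurableSet.univ MeasurableSet.univ
      simpa [Set.univ_prod_univ] using this
  -- transfer back to integrals
  have hmap : ∀ (d : Ω → ℝ≥0), Measurable[mΩ] d →
      ∫ p, u p ∂(Measure.map (fun ω => (Z ω, C ω)) (P.withDensity fun ω => (d ω : ℝ≥0∞)))
        = ∫ ω, ((d ω : ℝ)) * u (Z ω, C ω) ∂P := by
    intro d hd
    rw [integral_map hρ.aemeasurable hu.aestronglyMeasurable,
      integral_withDensity_eq_integral_smul hd]
    exact integral_congr_ae (Filter.Eventually.of_forall fun ω => NNReal.smul_def _ _)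
  have hint2 : ∫ ω, ((d1 ω : ℝ)) * u (Z ω, C ω) ∂P
      = ∫ ω, ((d2 ω : ℝ)) * u (Z ω, C ω) ∂P := by
    rw [← hmap d1 hd1, ← hmap d2 hd2, ← hμ₁def, ← hμ₂def, hμeq]
  have hint3 : ∫ ω, (φ (Y₀ ω) + Mφ) * u (Z ω, C ω) ∂P
      = ∫ ω, (b ω + Mφ) * u (Z ω, C ω) ∂P := by
    simpa only [hd1c, hd2c] using hint2
  have h1i : Integrable (fun ω => φ (Y₀ ω) * u (Z ω, C ω)) P :=
    aux_integrable (haM.mul hUM).aestronglyMeasurable (M := Mφ * Mu)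
      (Filter.Eventually.of_forall fun ω => by
        rw [abs_mul]; exact mul_le_mul (hφb _) (hub _) (abs_nonneg _) hMφ)
  have h2i : Integrable (fun ω => b ω * u (Z ω, C ω)) P :=
    aux_integrable (hbM.mul hUM).aestronglyMeasurable (M := Mφ * Mu)
      (Filter.Eventually.of_forall fun ω => by
        rw [abs_mul]; exact mul_le_mul (hbb _) (hub _) (abs_nonneg _) hMφ)
  have h3i : Integrable (fun ω => Mφ * u (Z ω, C ω)) P := hUi.const_mul Mφ
  have hab : ∫ ω, φ (Y₀ ω) * u (Z ω, C ω) ∂P = ∫ ω, b ω * u (Z ω, C ω) ∂P := by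
    have l : ∫ ω, (φ (Y₀ ω) + Mφ) * u (Z ω, C ω) ∂P
        = (∫ ω, φ (Y₀ ω) * u (Z ω, C ω) ∂P) + ∫ ω, Mφ * u (Z ω, C ω) ∂P := by
      rw [← integral_add h1i h3i]
      exact integral_congr_ae (Filter.Eventually.of_forall fun ω => by ring)
    have r : ∫ ω, (b ω + Mφ) * u (Z ω, C ω) ∂P
        = (∫ ω, b ω * u (Z ω, C ω) ∂P) + ∫ ω, Mφ * u (Z ω, C ω) ∂P := by
      rw [← integral_add h2i h3i]
      exact integral_congr_ae (Filter.Eventually.of_forall fun ω => by ring)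
    rw [l, r] at hint3
    linarith
  -- conclusion
  have hcUb := aux_condexp_bdd (P := P) mC hMu
    (Filter.Eventually.of_forall fun ω => hub (Z ω, C ω))
  have h4i : Integrable (fun ω => φ (Y₀ ω) * (P[fun ω' => u (Z ω', C ω')|mC]) ω) P :=
    aux_integrable
      (haM.mul (stronglyMeasurable_condExp.mono hmCle).measurable).aestronglyMeasurable
      (M := Mφ * Mu)
      (by filter_upwards [hcUb] with ω h
          rw [abs_mul]; exact mul_le_mul (hφb _) h (abs_nonneg _) hMφ)
  have hsub : ∫ ω, φ (Y₀ ω) * (u (Z ω, C ω) - (P[fun ω' => u (Z ω', C ω')|mC]) ω) ∂P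
      = (∫ ω, φ (Y₀ ω) * u (Z ω, C ω) ∂P)
          - ∫ ω, φ (Y₀ ω) * (P[fun ω' => u (Z ω', C ω')|mC]) ω ∂P := by
    rw [← integral_sub h1i h4i]
    exact integral_congr_ae (Filter.Eventually.of_forall fun ω => by ring)
  have hswap : ∫ ω, φ (Y₀ ω) * (P[fun ω' => u (Z ω', C ω')|mC]) ω ∂P
      = ∫ ω, (P[fun ω' => φ (Y₀ ω')|mC]) ω * u (Z ω, C ω) ∂P :=
    aux_swap hmCle haM.aestronglyMeasurable hUM.aestronglyMeasurable hMφ hMu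
      (Filter.Eventually.of_forall fun ω => hφb _)
      (Filter.Eventually.of_forall fun ω => hub _)
  have hca : ∫ ω, (P[fun ω' => φ (Y₀ ω')|mC]) ω * u (Z ω, C ω) ∂P
      = ∫ ω, b ω * u (Z ω, C ω) ∂P :=
    (integral_congr_ae (hba.mono fun ω h => by rw [h] : _)).symm
  rw [hsub, hswap, hca, ← hab]
  ring

lemma aux_C2 {Ω : Type*} {mΩ : MeasurableSpace Ω} (P : Measure Ω) [IsProbabilityMeasure P]
    {𝒵 𝒞 : Type*} [MeasurableSpace 𝒵] [MeasurableSpace 𝒞]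
    (Y₀ : Ω → ℝ) (Z : Ω → 𝒵) (C : Ω → 𝒞)
    (hY₀ : Measurable Y₀) (hZ : Measurable Z) (hC : Measurable C)
    (mC : MeasurableSpace Ω) (hmC : mC = MeasurableSpace.comap C inferInstance)
    (hCI : ∀ (φ : ℝ → ℝ) (ψ : 𝒵 → ℝ), Measurable φ → Measurable ψ →
        (∃ M, ∀ x, |φ x| ≤ M) → (∃ M, ∀ x, |ψ x| ≤ M) →
        P[fun ω => φ (Y₀ ω) * ψ (Z ω) | mC]
          =ᵐ[P] fun ω => (P[fun ω' => φ (Y₀ ω') | mC]) ω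
                        * (P[fun ω' => ψ (Z ω') | mC]) ω)
    (g : ℝ × 𝒞 → ℝ) (u : 𝒵 × 𝒞 → ℝ) (hg : Measurable g) (hu : Measurable u)
    (hgB : ∃ M, ∀ x, |g x| ≤ M) (huB : ∃ M, ∀ x, |u x| ≤ M) :
    ∫ ω, g (Y₀ ω, C ω) * (u (Z ω, C ω) - (P[fun ω' => u (Z ω', C ω') | mC]) ω) ∂P = 0 := by
  letI _i : MeasurableSpace Ω := mΩ
  obtain ⟨Mg0, hg0⟩ := hgB
  obtain ⟨Mu0, hu0⟩ := huB
  set Mg : ℝ := max Mg0 0 with hMgdef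
  have hMg : 0 ≤ Mg := le_max_right _ _
  have hgb : ∀ x, |g x| ≤ Mg := fun x => (hg0 x).trans (le_max_left _ _)
  set Mu : ℝ := max Mu0 0 with hMudef
  have hMu : 0 ≤ Mu := le_max_right _ _
  have hub : ∀ x, |u x| ≤ Mu := fun x => (hu0 x).trans (le_max_left _ _)
  have hmCle : mC ≤ mΩ := by rw [hmC]; exact hC.comap_le
  have hSF : SigmaFinite (P.trim hmCle) := aux_sigmaFinite_trim hmCle
  have hUM : Measurable[mΩ] fun ω => u (Z ω, C ω) := hu.comp (hZ.prodMk hC)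
  have hUi : Integrable (fun ω => u (Z ω, C ω)) P :=
    aux_integrable hUM.aestronglyMeasurable
      (Filter.Eventually.of_forall fun ω => hub (Z ω, C ω))
  have hGM : Measurable[mΩ] fun ω => g (Y₀ ω, C ω) := hg.comp (hY₀.prodMk hC)
  -- truncated conditional expectation of u (Z, C)
  set bu : Ω → ℝ :=
    fun ω => max (-Mu) (min ((P[fun ω' => u (Z ω', C ω')|mC]) ω) Mu) with hbudef
  have hbumC : Measurable[mC] bu :=
    Measurable.max measurable_const
      (Measurable.min stronglyMeasurable_condExp.measurable measurable_const)
  have hbuM : Measurable[mΩ] bu := hbumC.mono hmCle le_rfl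
  have hbub : ∀ ω, |bu ω| ≤ Mu := fun ω =>
    abs_le.mpr ⟨le_max_left _ _, max_le (by linarith) (min_le_right _ _)⟩
  have hbua : bu =ᵐ[P] P[fun ω' => u (Z ω', C ω')|mC] := by
    filter_upwards [aux_condexp_bdd (P := P) mC hMu
      (Filter.Eventually.of_forall fun ω => hub (Z ω, C ω))] with ω h
    obtain ⟨h1, h2⟩ := abs_le.1 h
    rw [hbudef]
    simp only
    rw [min_eq_left h2, max_eq_right h1]
  set h : Ω → ℝ := fun ω => u (Z ω, C ω) - bu ω with hhdef
  have hhM : Measurable[mΩ] h := hUM.sub hbuM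
  have hhb : ∀ ω, |h ω| ≤ Mu + Mu := fun ω => by
    have := abs_le.1 (hub (Z ω, C ω)); have := abs_le.1 (hbub ω)
    rw [hhdef]; simp only; rw [abs_le]; constructor <;> linarith
  have hhi : Integrable h P :=
    aux_integrable hhM.aestronglyMeasurable (Filter.Eventually.of_forall hhb)
  have hτ : Measurable[mΩ] fun ω => (Y₀ ω, C ω) := hY₀.prodMk hC
  set B : ℝ := Mu + Mu with hBdef
  have hB : 0 ≤ B := by rw [hBdef]; linarith
  set d1 : Ω → ℝ≥0 := fun ω => (h ω + B).toNNReal with hd1def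
  set d2 : Ω → ℝ≥0 := fun _ => (B : ℝ).toNNReal with hd2def
  have hd1 : Measurable[mΩ] d1 := (hhM.add measurable_const).real_toNNReal
  have hd2 : Measurable[mΩ] d2 := measurable_const
  have hd1c : ∀ ω, ((d1 ω : ℝ)) = h ω + B := fun ω =>
    Real.coe_toNNReal _ (by have := abs_le.1 (hhb ω); rw [hBdef]; linarith)
  have hd2c : ∀ ω, ((d2 ω : ℝ)) = B := fun ω => Real.coe_toNNReal _ hB
  have hfin : ∀ (d : Ω → ℝ≥0), Measurable[mΩ] d → (∀ ω, (d ω : ℝ) ≤ B + B) →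
      IsFiniteMeasure (P.withDensity fun ω => (d ω : ℝ≥0∞)) := by
    intro d hdm hd
    refine isFiniteMeasure_withDensity (ne_top_of_le_ne_top ?_
      (lintegral_mono (g := fun _ => ENNReal.ofReal (B + B)) fun ω => ?_))
    · rw [lintegral_const]
      exact ENNReal.mul_ne_top ENNReal.ofReal_ne_top (measure_ne_top _ _)
    · rw [← ENNReal.ofReal_coe_nnreal]
      exact ENNReal.ofReal_le_ofReal (hd ω)
  haveI hfin1 : IsFiniteMeasure (P.withDensity fun ω => (d1 ω : ℝ≥0∞)) :=
    hfin d1 hd1 (fun ω => by rw [hd1c]; have := abs_le.1 (hhb ω); rw [hBdef]; linarith)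
  haveI hfin2 : IsFiniteMeasure (P.withDensity fun ω => (d2 ω : ℝ≥0∞)) :=
    hfin d2 hd2 (fun ω => le_of_eq_of_le (hd2c ω) (by linarith))
  set ν₁ : Measure (ℝ × 𝒞) :=
    Measure.map (fun ω => (Y₀ ω, C ω)) (P.withDensity fun ω => (d1 ω : ℝ≥0∞)) with hν₁def
  set ν₂ : Measure (ℝ × 𝒞) :=
    Measure.map (fun ω => (Y₀ ω, C ω)) (P.withDensity fun ω => (d2 ω : ℝ≥0∞)) with hν₂def
  have happly : ∀ (d : Ω → ℝ≥0), Measurable[mΩ] d → (∀ ω, (d ω : ℝ) ≤ B + B) →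
      ∀ (s : Set (ℝ × 𝒞)), MeasurableSet s →
      (Measure.map (fun ω => (Y₀ ω, C ω)) (P.withDensity fun ω => (d ω : ℝ≥0∞))) s
        = ENNReal.ofReal (∫ ω in (fun ω => (Y₀ ω, C ω)) ⁻¹' s, ((d ω : ℝ)) ∂P) := by
    intro d hd hdb s hs
    rw [Measure.map_apply hτ hs, withDensity_apply _ (hτ hs)]
    exact lintegral_coe_eq_integral d
      (aux_integrable (measurable_coe_nnreal_real.comp hd).aestronglyMeasurable
        (M := B + B)
        (Filter.Eventually.of_forall fun ω => by
          rw [abs_of_nonneg (d ω).coe_nonneg]; exact hdb ω))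
  have hrect : ∀ (s : Set ℝ) (t : Set 𝒞), MeasurableSet s → MeasurableSet t →
      ν₁ (s ×ˢ t) = ν₂ (s ×ˢ t) := by
    intro s t hs ht
    rw [hν₁def, hν₂def,
      happly d1 hd1 (fun ω => by
        rw [hd1c]; have := abs_le.1 (hhb ω); rw [hBdef]; linarith) _ (hs.prod ht),
      happly d2 hd2 (fun ω => le_of_eq_of_le (hd2c ω) (by linarith)) _ (hs.prod ht)]
    congr 1
    have hpre : ((fun ω => (Y₀ ω, C ω)) ⁻¹' (s ×ˢ t)) = Y₀ ⁻¹' s ∩ C ⁻¹' t :=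
      Set.mk_preimage_prod Y₀ C
    rw [hpre]
    have hE : MeasurableSet (Y₀ ⁻¹' s ∩ C ⁻¹' t) := (hY₀ hs).inter (hC ht)
    -- the key: ∫ over the rectangle preimage of h vanishes
    have hkey : ∫ ω in Y₀ ⁻¹' s ∩ C ⁻¹' t, h ω ∂P = 0 := by
      set φS : ℝ → ℝ := s.indicator (fun _ => (1 : ℝ)) with hφSdef
      have hφS : Measurable φS := measurable_const.indicator hs
      have hφSb : ∀ x, |φS x| ≤ 1 := fun x => by
        by_cases hx : x ∈ s <;>
          simp [hφSdef, Set.indicator_of_mem, Set.indicator_of_notMem, hx]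
      set u' : 𝒵 × 𝒞 → ℝ := fun p => t.indicator (fun _ => (1 : ℝ)) p.2 * u p with hu'def
      have hu' : Measurable u' :=
        ((measurable_const.indicator ht).comp measurable_snd).mul hu
      have hu'b : ∀ x, |u' x| ≤ Mu := fun x => by
        rw [hu'def]; simp only
        rw [abs_mul]
        have h1 : |t.indicator (fun _ => (1 : ℝ)) x.2| ≤ 1 := by
          by_cases hx : x.2 ∈ t <;>
            simp [Set.indicator_of_mem, Set.indicator_of_notMem, hx]
        calc |t.indicator (fun _ => (1:ℝ)) x.2| * |u x| ≤ 1 * Mu :=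
              mul_le_mul h1 (hub x) (abs_nonneg _) zero_le_one
          _ = Mu := one_mul _
      have hzero := aux_C1 P Y₀ Z C hY₀ hZ hC mC hmC hCI φS u' hφS hu'
        ⟨1, hφSb⟩ ⟨Mu, hu'b⟩
      -- conditional expectation of u' factors through the indicator of t
      have hTmC : Measurable[mC] fun ω => t.indicator (fun _ => (1 : ℝ)) (C ω) := by
        have hCmC : Measurable[mC] C := by
          rw [hmC]; exact fun s hs => ⟨s, hs, rfl⟩
        exact (measurable_const.indicator ht).comp hCmC
      have hu'i : Integrable (fun ω => u' (Z ω, C ω)) P :=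
        aux_integrable (hu'.comp (hZ.prodMk hC)).aestronglyMeasurable
          (Filter.Eventually.of_forall fun ω => hu'b (Z ω, C ω))
      have hmulce : P[fun ω' => u' (Z ω', C ω')|mC]
          =ᵐ[P] fun ω => t.indicator (fun _ => (1 : ℝ)) (C ω)
                  * (P[fun ω' => u (Z ω', C ω')|mC]) ω := by
        have := condExp_mul_of_stronglyMeasurable_left (m := mC) (μ := P)
          (f := fun ω => t.indicator (fun _ => (1 : ℝ)) (C ω))
          (g := fun ω => u (Z ω, C ω)) hTmC.stronglyMeasurable
          (by
            have : (fun ω => t.indicator (fun _ => (1:ℝ)) (C ω))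
                * (fun ω => u (Z ω, C ω)) = fun ω => u' (Z ω, C ω) := by
              funext ω; rfl
            rw [this]; exact hu'i) hUi
        have heq : (fun ω => t.indicator (fun _ => (1:ℝ)) (C ω))
            * (fun ω => u (Z ω, C ω)) = fun ω => u' (Z ω, C ω) := by
          funext ω; rfl
        rw [heq] at this
        exact this
      have e : (fun ω => (Y₀ ⁻¹' s ∩ C ⁻¹' t).indicator h ω) =ᵐ[P]
          fun ω => φS (Y₀ ω)
            * (u' (Z ω, C ω) - (P[fun ω' => u' (Z ω', C ω')|mC]) ω) := by
        filter_upwards [hmulce, hbua] with ω h1 h2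
        rw [h1]
        show (Y₀ ⁻¹' s ∩ C ⁻¹' t).indicator h ω
          = φS (Y₀ ω) * (u' (Z ω, C ω)
              - t.indicator (fun _ => (1:ℝ)) (C ω) * (P[fun ω' => u (Z ω', C ω')|mC]) ω)
        rw [← h2]
        simp only [hφSdef, hu'def, hhdef, Set.indicator_apply, Set.mem_inter_iff,
          Set.mem_preimage]
        by_cases hYs : Y₀ ω ∈ s <;> by_cases hCt : C ω ∈ t <;>
          (try simp [hYs, hCt]) <;> (try ring)
      rw [← integral_indicator hE, integral_congr_ae e, hzero]
    calc ∫ ω in Y₀ ⁻¹' s ∩ C ⁻¹' t, ((d1 ω : ℝ)) ∂P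
        = ∫ ω in Y₀ ⁻¹' s ∩ C ⁻¹' t, (h ω + B) ∂P := by simp only [hd1c]
      _ = (∫ ω in Y₀ ⁻¹' s ∩ C ⁻¹' t, h ω ∂P)
            + ∫ ω in Y₀ ⁻¹' s ∩ C ⁻¹' t, B ∂P :=
          integral_add hhi.restrict (integrable_const _)
      _ = ∫ ω in Y₀ ⁻¹' s ∩ C ⁻¹' t, B ∂P := by rw [hkey, zero_add]
      _ = ∫ ω in Y₀ ⁻¹' s ∩ C ⁻¹' t, ((d2 ω : ℝ)) ∂P := by
          refine integral_congr_ae (Filter.Eventually.of_forall fun ω => ?_)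
          show B = ((d2 ω : ℝ))
          rw [hd2c ω]
  have hνeq : ν₁ = ν₂ := by
    refine ext_of_generate_finite _ generateFrom_prod.symm isPiSystem_prod
      (fun s hs => ?_) ?_
    · obtain ⟨s₁, hs₁, t₁, ht₁, rfl⟩ := hs
      exact hrect s₁ t₁ hs₁ ht₁
    · have := hrect Set.univ Set.univ MeasurableSet.univ MeasurableSet.univ
      simpa [Set.univ_prod_univ] using this
  have hmap : ∀ (d : Ω → ℝ≥0), Measurable[mΩ] d →
      ∫ p, g p ∂(Measure.map (fun ω => (Y₀ ω, C ω)) (P.withDensity fun ω => (d ω : ℝ≥0∞)))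
        = ∫ ω, ((d ω : ℝ)) * g (Y₀ ω, C ω) ∂P := by
    intro d hd
    rw [integral_map hτ.aemeasurable hg.aestronglyMeasurable,
      integral_withDensity_eq_integral_smul hd]
    exact integral_congr_ae (Filter.Eventually.of_forall fun ω => NNReal.smul_def _ _)
  have hint2 : ∫ ω, ((d1 ω : ℝ)) * g (Y₀ ω, C ω) ∂P
      = ∫ ω, ((d2 ω : ℝ)) * g (Y₀ ω, C ω) ∂P := by
    rw [← hmap d1 hd1, ← hmap d2 hd2, ← hν₁def, ← hν₂def, hνeq]
  have hint3 : ∫ ω, (h ω + B) * g (Y₀ ω, C ω) ∂P = ∫ ω, B * g (Y₀ ω, C ω) ∂P := by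
    calc ∫ ω, (h ω + B) * g (Y₀ ω, C ω) ∂P
        = ∫ ω, ((d1 ω : ℝ)) * g (Y₀ ω, C ω) ∂P :=
          integral_congr_ae (Filter.Eventually.of_forall fun ω => by
            show (h ω + B) * g (Y₀ ω, C ω) = ((d1 ω : ℝ)) * g (Y₀ ω, C ω)
            rw [hd1c ω])
      _ = ∫ ω, ((d2 ω : ℝ)) * g (Y₀ ω, C ω) ∂P := hint2
      _ = ∫ ω, B * g (Y₀ ω, C ω) ∂P :=
          integral_congr_ae (Filter.Eventually.of_forall fun ω => by
            show ((d2 ω : ℝ)) * g (Y₀ ω, C ω) = B * g (Y₀ ω, C ω)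
            rw [hd2c ω])
  have h1i : Integrable (fun ω => h ω * g (Y₀ ω, C ω)) P :=
    aux_integrable (hhM.mul hGM).aestronglyMeasurable (M := (Mu + Mu) * Mg)
      (Filter.Eventually.of_forall fun ω => by
        rw [abs_mul]
        exact mul_le_mul (hhb _) (hgb _) (abs_nonneg _) (by linarith))
  have h3i : Integrable (fun ω => B * g (Y₀ ω, C ω)) P :=
    (aux_integrable hGM.aestronglyMeasurable
      (Filter.Eventually.of_forall fun ω => hgb (Y₀ ω, C ω))).const_mul B
  have hGh : ∫ ω, h ω * g (Y₀ ω, C ω) ∂P = 0 := by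
    have l : ∫ ω, (h ω + B) * g (Y₀ ω, C ω) ∂P
        = (∫ ω, h ω * g (Y₀ ω, C ω) ∂P) + ∫ ω, B * g (Y₀ ω, C ω) ∂P := by
      rw [← integral_add h1i h3i]
      exact integral_congr_ae (Filter.Eventually.of_forall fun ω => by ring)
    rw [l] at hint3
    linarith
  have efin : (fun ω => g (Y₀ ω, C ω)
      * (u (Z ω, C ω) - (P[fun ω' => u (Z ω', C ω')|mC]) ω)) =ᵐ[P]
      fun ω => h ω * g (Y₀ ω, C ω) := by
    filter_upwards [hbua] with ω h2
    rw [hhdef]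
    show _ = (u (Z ω, C ω) - bu ω) * _
    rw [h2]
    ring
  rw [integral_congr_ae efin, hGh]

/-- Unbiasedness of the doubly robust estimating equation (13) in model `𝓜_a`
(correct extended propensity score): with `π` a version of
`E[A | σ(Y₀, Z, C)]` with `π < 1` a.s. and `Y₀ ⟂ Z | σ(C)`, for all bounded
measurable `w`, `g` and any bounded measurable `m*` of `(Z, C)`,
`E[(w(Z,C) - E[w(Z,C)|σ(C)]) ((1-A)/(1-π) g(Y₀,C) + ((A-π)/(1-π)) m*(Z,C))] = 0`. -/
theorem dr_estimating_equation_unbiased_Ma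
    {Ω : Type*} {mΩ : MeasurableSpace Ω} (P : Measure Ω) [IsProbabilityMeasure P]
    {𝒵 𝒞 : Type*} [MeasurableSpace 𝒵] [MeasurableSpace 𝒞]
    (A Y₀ π : Ω → ℝ) (Z : Ω → 𝒵) (C : Ω → 𝒞)
    (hA : Measurable A) (hY₀ : Measurable Y₀)
    (hZ : Measurable Z) (hC : Measurable C)
    (hAval : ∀ ω, A ω = 0 ∨ A ω = 1)
    (𝒢 mC : MeasurableSpace Ω)
    (h𝒢 : 𝒢 = MeasurableSpace.comap Y₀ inferInstance ⊔
              MeasurableSpace.comap Z inferInstance ⊔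
              MeasurableSpace.comap C inferInstance)
    (hmC : mC = MeasurableSpace.comap C inferInstance)
    (h𝒢le : 𝒢 ≤ mΩ)
    (hπ : π =ᵐ[P] P[A | 𝒢])
    (hπlt : ∀ᵐ ω ∂P, π ω < 1)
    -- conditional independence of `Y₀` and `Z` given `σ(C)`
    (hCI : ∀ (φ : ℝ → ℝ) (ψ : 𝒵 → ℝ), Measurable φ → Measurable ψ →
        (∃ M, ∀ x, |φ x| ≤ M) → (∃ M, ∀ x, |ψ x| ≤ M) →
        P[fun ω => φ (Y₀ ω) * ψ (Z ω) | mC]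
          =ᵐ[P] fun ω => (P[fun ω' => φ (Y₀ ω') | mC]) ω
                        * (P[fun ω' => ψ (Z ω') | mC]) ω) :
    ∀ (w : 𝒵 × 𝒞 → ℝ) (g : ℝ × 𝒞 → ℝ) (m : 𝒵 × 𝒞 → ℝ),
      Measurable w → Measurable g → Measurable m →
      (∃ M, ∀ x, |w x| ≤ M) → (∃ M, ∀ x, |g x| ≤ M) → (∃ M, ∀ x, |m x| ≤ M) →
      Integrable (fun ω =>
        (w (Z ω, C ω) - (P[fun ω' => w (Z ω', C ω') | mC]) ω) *
          ((1 - A ω) / (1 - π ω) * g (Y₀ ω, C ω)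
            + (A ω - π ω) / (1 - π ω) * m (Z ω, C ω))) P →
      ∫ ω, (w (Z ω, C ω) - (P[fun ω' => w (Z ω', C ω') | mC]) ω) *
          ((1 - A ω) / (1 - π ω) * g (Y₀ ω, C ω)
            + (A ω - π ω) / (1 - π ω) * m (Z ω, C ω)) ∂P = 0 := by
  intro w g m hw hg hmm hwB hgB hmB hInt
  letI _i : MeasurableSpace Ω := mΩ
  obtain ⟨Mw0, hw0⟩ := hwB
  obtain ⟨Mg0, hg0⟩ := hgB
  obtain ⟨Mm0, hm0⟩ := hmB
  set Mw : ℝ := max Mw0 0 with hMwdef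
  have hMw : 0 ≤ Mw := le_max_right _ _
  have hwb : ∀ x, |w x| ≤ Mw := fun x => (hw0 x).trans (le_max_left _ _)
  set Mg : ℝ := max Mg0 0 with hMgdef
  have hMg : 0 ≤ Mg := le_max_right _ _
  have hgb : ∀ x, |g x| ≤ Mg := fun x => (hg0 x).trans (le_max_left _ _)
  set Mm : ℝ := max Mm0 0 with hMmdef
  have hMm : 0 ≤ Mm := le_max_right _ _
  have hmb : ∀ x, |m x| ≤ Mm := fun x => (hm0 x).trans (le_max_left _ _)
  have hmCle : mC ≤ mΩ := by rw [hmC]; exact hC.comap_le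
  have hmC𝒢 : mC ≤ 𝒢 := by rw [hmC, h𝒢]; exact le_sup_right
  have hSF : SigmaFinite (P.trim h𝒢le) := aux_sigmaFinite_trim h𝒢le
  have hSFC : SigmaFinite (P.trim hmCle) := aux_sigmaFinite_trim hmCle
  -- 𝒢-measurability facts
  have hY𝒢 : Measurable[𝒢] Y₀ := by
    refine Measurable.mono (measurable_iff_comap_le.mpr le_rfl) ?_ le_rfl
    rw [h𝒢]; exact le_sup_of_le_left le_sup_left
  have hZ𝒢 : Measurable[𝒢] Z := by
    refine Measurable.mono (measurable_iff_comap_le.mpr le_rfl) ?_ le_rfl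
    rw [h𝒢]; exact le_sup_of_le_left le_sup_right
  have hC𝒢 : Measurable[𝒢] C := by
    refine Measurable.mono (measurable_iff_comap_le.mpr le_rfl) ?_ le_rfl
    rw [h𝒢]; exact le_sup_right
  have hW𝒢 : Measurable[𝒢] fun ω => w (Z ω, C ω) := hw.comp (hZ𝒢.prodMk hC𝒢)
  have hG𝒢 : Measurable[𝒢] fun ω => g (Y₀ ω, C ω) := hg.comp (hY𝒢.prodMk hC𝒢)
  have hEM𝒢 : Measurable[𝒢] fun ω => m (Z ω, C ω) := hmm.comp (hZ𝒢.prodMk hC𝒢)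
  have hbW𝒢 : Measurable[𝒢] (P[fun ω' => w (Z ω', C ω')|mC]) :=
    (stronglyMeasurable_condExp.mono hmC𝒢).measurable
  have hπ'𝒢 : Measurable[𝒢] (P[A|𝒢]) := stronglyMeasurable_condExp.measurable
  have hD𝒢 : Measurable[𝒢]
      (fun ω => w (Z ω, C ω) - (P[fun ω' => w (Z ω', C ω')|mC]) ω) := hW𝒢.sub hbW𝒢
  -- mΩ-measurability facts
  have hWM : Measurable[mΩ] fun ω => w (Z ω, C ω) := hw.comp (hZ.prodMk hC)
  have hGM : Measurable[mΩ] fun ω => g (Y₀ ω, C ω) := hg.comp (hY₀.prodMk hC)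
  have hEMM : Measurable[mΩ] fun ω => m (Z ω, C ω) := hmm.comp (hZ.prodMk hC)
  have hbWM : Measurable[mΩ] (P[fun ω' => w (Z ω', C ω')|mC]) :=
    (stronglyMeasurable_condExp.mono hmCle).measurable
  have hπ'M : Measurable[mΩ] (P[A|𝒢]) :=
    (stronglyMeasurable_condExp.mono h𝒢le).measurable
  have hDM : Measurable[mΩ]
      (fun ω => w (Z ω, C ω) - (P[fun ω' => w (Z ω', C ω')|mC]) ω) := hWM.sub hbWM
  -- basic bounds
  have hAb : ∀ ω, |A ω| ≤ 1 := fun ω => by rcases hAval ω with h | h <;> rw [h] <;> norm_num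
  have hAi : Integrable A P :=
    aux_integrable hA.aestronglyMeasurable (Filter.Eventually.of_forall hAb)
  have habs : ∀ᵐ ω ∂P, |(P[A|𝒢]) ω| ≤ 1 :=
    aux_condexp_bdd (P := P) 𝒢 (by norm_num) (Filter.Eventually.of_forall hAb)
  have hlt : ∀ᵐ ω ∂P, (P[A|𝒢]) ω < 1 := by
    filter_upwards [hπ, hπlt] with ω h1 h2
    rw [← h1]; exact h2
  have hbWb : ∀ᵐ ω ∂P, |(P[fun ω' => w (Z ω', C ω')|mC]) ω| ≤ Mw :=
    aux_condexp_bdd (P := P) mC hMw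
      (Filter.Eventually.of_forall fun ω => hwb (Z ω, C ω))
  have hDb : ∀ᵐ ω ∂P,
      |w (Z ω, C ω) - (P[fun ω' => w (Z ω', C ω')|mC]) ω| ≤ Mw + Mw := by
    filter_upwards [hbWb] with ω h1
    have := abs_le.1 (hwb (Z ω, C ω)); have := abs_le.1 h1
    rw [abs_le]; constructor <;> linarith
  -- the pointwise rewriting of the integrand
  have e1 : (fun ω => (w (Z ω, C ω) - (P[fun ω' => w (Z ω', C ω')|mC]) ω) *
          ((1 - A ω) / (1 - π ω) * g (Y₀ ω, C ω)
            + (A ω - π ω) / (1 - π ω) * m (Z ω, C ω)))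
      =ᵐ[P] fun ω =>
        A ω * ((w (Z ω, C ω) - (P[fun ω' => w (Z ω', C ω')|mC]) ω) * m (Z ω, C ω))
        + (1 - A ω) * ((w (Z ω, C ω) - (P[fun ω' => w (Z ω', C ω')|mC]) ω)
            * (1 - (P[A|𝒢]) ω)⁻¹
            * (g (Y₀ ω, C ω) - (P[A|𝒢]) ω * m (Z ω, C ω))) := by
    filter_upwards [hπ, hlt] with ω h1 h2
    have hne : 1 - (P[A|𝒢]) ω ≠ 0 := sub_ne_zero.mpr (ne_of_lt h2).symm
    rw [h1]
    rcases hAval ω with h | h <;> rw [h]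
    · simp only [div_eq_mul_inv]; ring
    · rw [div_self hne]; simp only [div_eq_mul_inv]; ring
  have hIntX : Integrable (fun ω =>
      A ω * ((w (Z ω, C ω) - (P[fun ω' => w (Z ω', C ω')|mC]) ω) * m (Z ω, C ω))
      + (1 - A ω) * ((w (Z ω, C ω) - (P[fun ω' => w (Z ω', C ω')|mC]) ω)
          * (1 - (P[A|𝒢]) ω)⁻¹
          * (g (Y₀ ω, C ω) - (P[A|𝒢]) ω * m (Z ω, C ω)))) P := hInt.congr e1
  have hT1i : Integrable (fun ω =>
      A ω * ((w (Z ω, C ω) - (P[fun ω' => w (Z ω', C ω')|mC]) ω) * m (Z ω, C ω))) P := by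
    refine aux_integrable (hA.mul (hDM.mul hEMM)).aestronglyMeasurable
      (M := 1 * ((Mw + Mw) * Mm)) ?_
    filter_upwards [hDb] with ω h1
    rw [abs_mul, abs_mul]
    exact mul_le_mul (hAb ω)
      (mul_le_mul h1 (hmb _) (abs_nonneg _) (by linarith))
      (by positivity) zero_le_one
  have hT2i : Integrable (fun ω =>
      (1 - A ω) * ((w (Z ω, C ω) - (P[fun ω' => w (Z ω', C ω')|mC]) ω)
        * (1 - (P[A|𝒢]) ω)⁻¹
        * (g (Y₀ ω, C ω) - (P[A|𝒢]) ω * m (Z ω, C ω)))) P := by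
    refine (hIntX.sub hT1i).congr (Filter.Eventually.of_forall fun ω => ?_)
    simp only [Pi.sub_apply]
    ring
  -- split the integral
  rw [integral_congr_ae e1, integral_add hT1i hT2i]
  -- first term
  have hT1 : ∫ ω, A ω * ((w (Z ω, C ω) - (P[fun ω' => w (Z ω', C ω')|mC]) ω)
        * m (Z ω, C ω)) ∂P
      = ∫ ω, ((w (Z ω, C ω) - (P[fun ω' => w (Z ω', C ω')|mC]) ω) * m (Z ω, C ω))
          * (P[A|𝒢]) ω ∂P := by
    rw [integral_congr_ae (Filter.Eventually.of_forall
      (fun ω => mul_comm (A ω) _) :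
        _ =ᵐ[P] fun ω => ((w (Z ω, C ω) - (P[fun ω' => w (Z ω', C ω')|mC]) ω)
          * m (Z ω, C ω)) * A ω)]
    exact aux_pullout h𝒢le (hD𝒢.mul hEM𝒢).stronglyMeasurable hAi
      (hT1i.congr (Filter.Eventually.of_forall fun ω => by ring))
  -- second term
  have h1Ai : Integrable (fun ω => 1 - A ω) P := (integrable_const 1).sub hAi
  have hF𝒢 : StronglyMeasurable[𝒢] fun ω =>
      (w (Z ω, C ω) - (P[fun ω' => w (Z ω', C ω')|mC]) ω) * (1 - (P[A|𝒢]) ω)⁻¹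
        * (g (Y₀ ω, C ω) - (P[A|𝒢]) ω * m (Z ω, C ω)) :=
    ((hD𝒢.mul (measurable_const.sub hπ'𝒢).inv).mul
      (hG𝒢.sub (hπ'𝒢.mul hEM𝒢))).stronglyMeasurable
  have hce1A : P[fun ω => 1 - A ω|𝒢] =ᵐ[P] fun ω => 1 - (P[A|𝒢]) ω := by
    have h1 := condExp_sub (m := 𝒢) (μ := P) (f := fun _ => (1 : ℝ)) (g := A)
      (integrable_const 1) hAi
    rw [condExp_const h𝒢le] at h1
    exact h1
  have hT2 : ∫ ω, (1 - A ω) * ((w (Z ω, C ω) - (P[fun ω' => w (Z ω', C ω')|mC]) ω)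
        * (1 - (P[A|𝒢]) ω)⁻¹ * (g (Y₀ ω, C ω) - (P[A|𝒢]) ω * m (Z ω, C ω))) ∂P
      = ∫ ω, ((w (Z ω, C ω) - (P[fun ω' => w (Z ω', C ω')|mC]) ω)
          * (g (Y₀ ω, C ω) - (P[A|𝒢]) ω * m (Z ω, C ω))) ∂P := by
    rw [integral_congr_ae (Filter.Eventually.of_forall
      (fun ω => mul_comm ((1 : ℝ) - A ω) _) :
        _ =ᵐ[P] fun ω => ((w (Z ω, C ω) - (P[fun ω' => w (Z ω', C ω')|mC]) ω)
          * (1 - (P[A|𝒢]) ω)⁻¹ * (g (Y₀ ω, C ω) - (P[A|𝒢]) ω * m (Z ω, C ω)))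
            * (1 - A ω))]
    rw [aux_pullout h𝒢le hF𝒢 h1Ai
      (hT2i.congr (Filter.Eventually.of_forall fun ω => by ring))]
    refine integral_congr_ae ?_
    filter_upwards [hce1A, hlt] with ω h1 h2
    have hne : 1 - (P[A|𝒢]) ω ≠ 0 := sub_ne_zero.mpr (ne_of_lt h2).symm
    rw [h1]
    show _ * (1 - (P[A|𝒢]) ω) = _
    field_simp
  -- the two remaining integrable products
  have hDGi : Integrable (fun ω =>
      (w (Z ω, C ω) - (P[fun ω' => w (Z ω', C ω')|mC]) ω) * g (Y₀ ω, C ω)) P := by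
    refine aux_integrable (hDM.mul hGM).aestronglyMeasurable (M := (Mw + Mw) * Mg) ?_
    filter_upwards [hDb] with ω h1
    rw [abs_mul]
    exact mul_le_mul h1 (hgb _) (abs_nonneg _) (by linarith)
  have hDpEMi : Integrable (fun ω =>
      (w (Z ω, C ω) - (P[fun ω' => w (Z ω', C ω')|mC]) ω)
        * ((P[A|𝒢]) ω * m (Z ω, C ω))) P := by
    refine aux_integrable (hDM.mul (hπ'M.mul hEMM)).aestronglyMeasurable
      (M := (Mw + Mw) * (1 * Mm)) ?_
    filter_upwards [hDb, habs] with ω h1 h2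
    rw [abs_mul, abs_mul]
    exact mul_le_mul h1
      (mul_le_mul h2 (hmb _) (abs_nonneg _) zero_le_one)
      (by positivity) (by linarith)
  have hT2' : ∫ ω, ((w (Z ω, C ω) - (P[fun ω' => w (Z ω', C ω')|mC]) ω)
        * (g (Y₀ ω, C ω) - (P[A|𝒢]) ω * m (Z ω, C ω))) ∂P
      = (∫ ω, (w (Z ω, C ω) - (P[fun ω' => w (Z ω', C ω')|mC]) ω)
            * g (Y₀ ω, C ω) ∂P)
        - ∫ ω, (w (Z ω, C ω) - (P[fun ω' => w (Z ω', C ω')|mC]) ω)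
            * ((P[A|𝒢]) ω * m (Z ω, C ω)) ∂P := by
    rw [← integral_sub hDGi hDpEMi]
    exact integral_congr_ae (Filter.Eventually.of_forall fun ω => by ring)
  have hT1' : ∫ ω, ((w (Z ω, C ω) - (P[fun ω' => w (Z ω', C ω')|mC]) ω)
        * m (Z ω, C ω)) * (P[A|𝒢]) ω ∂P
      = ∫ ω, (w (Z ω, C ω) - (P[fun ω' => w (Z ω', C ω')|mC]) ω)
          * ((P[A|𝒢]) ω * m (Z ω, C ω)) ∂P :=
    integral_congr_ae (Filter.Eventually.of_forall fun ω => by ring)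
  -- final: the remaining integral vanishes by conditional independence
  have hfinal : ∫ ω, (w (Z ω, C ω) - (P[fun ω' => w (Z ω', C ω')|mC]) ω)
      * g (Y₀ ω, C ω) ∂P = 0 := by
    have h0 := aux_C2 P Y₀ Z C hY₀ hZ hC mC hmC hCI g w hg hw ⟨Mg0, hg0⟩ ⟨Mw0, hw0⟩
    rw [← h0]
    exact integral_congr_ae (Filter.Eventually.of_forall fun ω => by ring)
  rw [hT1, hT2, hT2', hT1', hfinal]
  ring
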